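/- Let (Ψ_p)_{p∈P} be a family of IFS of affine contractions satisfying assumption (T_aff). Let p₀ ∈ P, ε > 0, and δ > 0 be such that B := (p₀−δ, p₀+δ) ⊂ P and Λ_{p₁,a}^{1+ε/2} ≤ Λ_{p₂,a} for all p₁, p₂ ∈ B and a ∈ 𝒜 (hence Λ_{p₁,α}^{1+ε/2} ≤ Λ_{p₂,α} for all finite words α). Then there exists C' > 0 such that for every n ≥ 0, every ρ ∈ 𝒜^n, every pair (α,β) ∈ C_ρ and every r > 0: Leb₁{p ∈ B : |π_p(α) − π_p(β)| < r} ≤ C'·r·Λ_{p₀,ρ}^{−1−ε/2}. -/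
import Mathlib


open Filter MeasureTheory Set
open scoped Topology ENNReal NNReal

noncomputable section

namespace Paper

abbrev E (n : ℕ) : Type := EuclideanSpace ℝ (Fin n)

def cube (N : ℕ) : Set (E N) := {x | ∀ i, x i ∈ Icc (-1:ℝ) 1}

def cubeO (d : ℕ) : Set (E d) := {p | ∀ i, p i ∈ Ioo (-1:ℝ) 1}

variable {A : Type}

def consF (a : A) (𝔞 : ℕ → A) : ℕ → A := fun n =>
  match n with
  | 0 => a
  | Nat.succ k => 𝔞 k

def app : List A → (ℕ → A) → ℕ → A
  | [], 𝔞 => 𝔞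
  | a :: w, 𝔞 => app w (consF a 𝔞)

def trunc (α : ℕ → A) (n : ℕ) : List A := List.ofFn fun i : Fin n => α i

def cyl (w : List A) : Set (ℕ → A) := {α | ∀ i : Fin w.length, α i = w.get i}

variable {N d : ℕ}

def psi (f : E d → (ℕ → A) → E N → E N) (p : E d) : List A → (ℕ → A) → E N → E N
  | [], _ => id
  | a :: w, 𝔞 => f p (consF a 𝔞) ∘ psi f p w (consF a 𝔞)

def dentry (g : E N → E N) (x : E N) (i j : Fin N) : ℝ :=
  fderiv ℝ g x (EuclideanSpace.single j (1:ℝ)) i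

def lam (hN : 0 < N) (f : E d → (ℕ → A) → E N → E N) (p : E d) (𝔞 : ℕ → A)
    (w : List A) (x : E N) : ℝ :=
  |dentry (psi f p w 𝔞) x ⟨0, hN⟩ ⟨0, hN⟩|

def Lam (hN : 0 < N) (f : E d → (ℕ → A) → E N → E N) (p : E d) (𝔞 : ℕ → A)
    (w : List A) : ℝ :=
  sSup ((fun x => lam hN f p 𝔞 w x) '' cube N)

def piProj (f : E d → (ℕ → A) → E N → E N) (p : E d) (𝔞 α : ℕ → A) : E N :=
  limUnder atTop fun n => psi f p (trunc α n) 𝔞 0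

def Mop (g : E N → E N) : ℝ := sSup ((fun x => ‖fderiv ℝ g x‖) '' cube N)

def pressure [Fintype A] (f : E d → (ℕ → A) → E N → E N) (p : E d) (𝔞 : ℕ → A) (s : ℝ) : ℝ :=
  limUnder atTop fun n : ℕ =>
    (1 / n : ℝ) * Real.log (∑ w : Fin n → A, Mop (psi f p (List.ofFn w) 𝔞) ^ s)

structure SkewFamily (A : Type) (N d : ℕ) (r : ℕ∞) where
  f : E d → (ℕ → A) → E N → E N
  X' : Set (E N)
  P' : Set (E d)
  X'_open : IsOpen X'
  X_subset : cube N ⊆ X'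
  P'_open : IsOpen P'
  P_subset : closure (cubeO d) ⊆ P'
  smooth : ∀ 𝔞 : ℕ → A, ContDiffOn ℝ r (fun q : E d × E N => f q.1 𝔞 q.2) (P' ×ˢ X')
  inj : ∀ 𝔞 : ℕ → A, ∀ p ∈ P', Set.InjOn (f p 𝔞) X'
  into : ∀ 𝔞 : ℕ → A, ∀ p ∈ P', f p 𝔞 '' X' ⊆ cube N
  holder0 : ∃ C > (0:ℝ), ∃ θ ∈ Set.Ioo (0:ℝ) 1, ∀ p ∈ P', ∀ (𝔞 𝔟 : ℕ → A) (q : ℕ),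
      (∀ i < q, 𝔞 i = 𝔟 i) → ∀ x ∈ X', ‖f p 𝔞 x - f p 𝔟 x‖ ≤ C * θ ^ q
  holder1 : ∃ C > (0:ℝ), ∃ θ ∈ Set.Ioo (0:ℝ) 1, ∀ p ∈ P', ∀ (𝔞 𝔟 : ℕ → A) (q : ℕ),
      (∀ i < q, 𝔞 i = 𝔟 i) → ∀ x ∈ X',
      ‖fderiv ℝ (f p 𝔞) x - fderiv ℝ (f p 𝔟) x‖ ≤ C * θ ^ q
  cont2 : ∀ p ∈ P', ∀ 𝔞 : ℕ → A, ∀ ε > (0:ℝ), ∃ q : ℕ, ∀ 𝔟 : ℕ → A,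
      (∀ i < q, 𝔞 i = 𝔟 i) → ∀ x ∈ X',
      ‖iteratedFDeriv ℝ 2 (f p 𝔞) x - iteratedFDeriv ℝ 2 (f p 𝔟) x‖ ≤ ε

def UnipOn (hN : 0 < N) (f : E d → (ℕ → A) → E N → E N)
    (P' : Set (E d)) (X' : Set (E N)) : Prop :=
  ∀ p ∈ P', ∀ 𝔞 : ℕ → A, ∀ x ∈ X',
    (∀ i j : Fin N, (i : ℕ) < (j : ℕ) → dentry (f p 𝔞) x i j = 0) ∧
    (∀ i j : Fin N, dentry (f p 𝔞) x i i = dentry (f p 𝔞) x j j) ∧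
    0 < |dentry (f p 𝔞) x ⟨0, hN⟩ ⟨0, hN⟩| ∧ |dentry (f p 𝔞) x ⟨0, hN⟩ ⟨0, hN⟩| < 1

def GammaBounds (hN : 0 < N) (f : E d → (ℕ → A) → E N → E N) (γ' γ : ℝ) : Prop :=
  0 < γ' ∧ γ' < γ ∧ γ < 1 ∧
  ∀ p ∈ closure (cubeO d), ∀ (𝔞 : ℕ → A) (a : A), ∀ x ∈ cube N,
    γ' < lam hN f p 𝔞 [a] x ∧ lam hN f p 𝔞 [a] x < γ

structure ParamPerturb {A : Type} {N d : ℕ} {r : ℕ∞} (hN : 0 < N)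
    (S : SkewFamily A N d r) (θ : ℝ) (τ : ℕ) where
  g : E τ → E d → (ℕ → A) → E N → E N
  jointSmooth : ∀ 𝔞 : ℕ → A, ContDiffOn ℝ r
      (fun q : E τ × E d × E N => g q.1 q.2.1 𝔞 q.2.2) ((cubeO τ) ×ˢ S.P' ×ˢ S.X')
  smooth : ∀ t ∈ cubeO τ, ∀ 𝔞 : ℕ → A, ContDiffOn ℝ r
      (fun q : E d × E N => g t q.1 𝔞 q.2) (S.P' ×ˢ S.X')
  inj : ∀ t ∈ cubeO τ, ∀ 𝔞 : ℕ → A, ∀ p ∈ S.P', Set.InjOn (g t p 𝔞) S.X'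
  into : ∀ t ∈ cubeO τ, ∀ 𝔞 : ℕ → A, ∀ p ∈ S.P', g t p 𝔞 '' S.X' ⊆ cube N
  close : ∃ θ' < θ, ∀ t ∈ cubeO τ, ∀ (𝔞 : ℕ → A) (k : ℕ), (k : ℕ∞) ≤ r →
      ∀ p ∈ S.P', ∀ x ∈ S.X',
      ‖iteratedFDeriv ℝ k (fun q : E d × E N => S.f q.1 𝔞 q.2 - g t q.1 𝔞 q.2) (p, x)‖ ≤ θ'
  unip : ∀ t ∈ cubeO τ, UnipOn hN (g t) S.P' S.X'

def TransAssumption {A : Type} {N d : ℕ} {r : ℕ∞} (hN : 0 < N)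
    (S : SkewFamily A N d r) : Prop :=
  ∃ C > (0:ℝ),
    (∀ 𝔞 α β : ℕ → A, α 0 ≠ β 0 → ∀ rr > (0:ℝ),
      volume {p ∈ cubeO d | ‖piProj S.f p 𝔞 α - piProj S.f p 𝔞 β‖ < rr}
        ≤ ENNReal.ofReal (C * rr ^ N)) ∧
    ∃ θ₀ > (0:ℝ), ∀ θ : ℝ, 0 < θ → θ ≤ θ₀ → ∀ τ : ℕ, 0 < τ →
      ∀ Ft : ParamPerturb hN S θ τ, ∀ t ∈ cubeO τ,
      ∀ 𝔞 α β : ℕ → A, α 0 ≠ β 0 → ∀ rr > (0:ℝ),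
        volume {p ∈ cubeO d | ‖piProj (Ft.g t) p 𝔞 α - piProj (Ft.g t) p 𝔞 β‖ < rr}
          ≤ ENNReal.ofReal (C * rr ^ N)

def dens {N : ℕ} (ν : Measure (E N)) (x : E N) : ℝ≥0∞ :=
  liminf (fun rr : ℝ => ν (Metric.ball x rr) / volume (Metric.ball (0 : E N) rr)) (𝓝[>] (0:ℝ))

end Paper

namespace IFS

open Paper

variable {A : Type}

def psiA (c b : ℝ → A → ℝ) (p : ℝ) : List A → ℝ → ℝ
  | [], x => x
  | a :: w, x => c p a * psiA c b p w x + b p a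

def piA (c b : ℝ → A → ℝ) (p : ℝ) (α : ℕ → A) : ℝ :=
  limUnder atTop fun n => psiA c b p (Paper.trunc α n) 0

def LamA (c : ℝ → A → ℝ) (p : ℝ) (w : List A) : ℝ := (w.map fun a => |c p a|).prod

def IFSHyp (c b : ℝ → A → ℝ) (U : Set ℝ) : Prop :=
  IsOpen U ∧ Icc (-1:ℝ) 1 ⊆ U ∧
  (∀ a : A, ContinuousOn (fun p => c p a) U) ∧
  (∀ a : A, ContinuousOn (fun p => b p a) U) ∧
  (∀ p ∈ U, ∀ a : A, ∀ x ∈ Icc (-1:ℝ) 1, c p a * x + b p a ∈ Ioo (-1:ℝ) 1)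

def GammaBoundsA (c : ℝ → A → ℝ) (γ' γ : ℝ) : Prop :=
  0 < γ' ∧ γ' < γ ∧ γ < 1 ∧ ∀ p ∈ Icc (-1:ℝ) 1, ∀ a : A, γ' < |c p a| ∧ |c p a| < γ

def TransAff (c b : ℝ → A → ℝ) : Prop :=
  ∃ C > (0:ℝ), ∀ α β : ℕ → A, α 0 ≠ β 0 → ∀ rr > (0:ℝ),
    volume {p ∈ Ioo (-1:ℝ) 1 | |piA c b p α - piA c b p β| < rr} ≤ ENNReal.ofReal (C * rr)

def densR (ν : MeasureTheory.Measure ℝ) (x : ℝ) : ℝ≥0∞ :=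
  liminf (fun rr : ℝ => ν (Ioo (x - rr) (x + rr)) / ENNReal.ofReal (2 * rr)) (𝓝[>] (0:ℝ))

end IFS

namespace IFS

variable {A : Type}

lemma psiA_cons (c b : ℝ → A → ℝ) (p : ℝ) (a : A) (w : List A) (x : ℝ) :
    psiA c b p (a :: w) x = c p a * psiA c b p w x + b p a := rfl

lemma psiA_mem (c b : ℝ → A → ℝ) (U : Set ℝ) (h : IFSHyp c b U)
    {p : ℝ} (hp : p ∈ U) (w : List A) {x : ℝ} (hx : x ∈ Icc (-1:ℝ) 1) :
    psiA c b p w x ∈ Icc (-1:ℝ) 1 := by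
  induction w with
  | nil => exact hx
  | cons a w ih =>
    rw [psiA_cons]
    exact Ioo_subset_Icc_self (h.2.2.2.2 p hp a _ ih)

lemma psiA_append (c b : ℝ → A → ℝ) (p : ℝ) (w₁ w₂ : List A) (x : ℝ) :
    psiA c b p (w₁ ++ w₂) x = psiA c b p w₁ (psiA c b p w₂ x) := by
  induction w₁ with
  | nil => rfl
  | cons a w ih => simp [psiA_cons, ih]

lemma psiA_sub (c b : ℝ → A → ℝ) (p : ℝ) (w : List A) (x y : ℝ) :
    psiA c b p w x - psiA c b p w y = (w.map (c p)).prod * (x - y) := by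
  induction w with
  | nil => simp [psiA]
  | cons a w ih =>
    simp only [psiA_cons, List.map_cons, List.prod_cons]
    rw [mul_assoc, ← ih]; ring

lemma LamA_nil (c : ℝ → A → ℝ) (p : ℝ) : LamA c p [] = 1 := rfl

lemma LamA_cons (c : ℝ → A → ℝ) (p : ℝ) (a : A) (w : List A) :
    LamA c p (a :: w) = |c p a| * LamA c p w := by
  simp [LamA]

lemma abs_psiA_sub (c b : ℝ → A → ℝ) (p : ℝ) (w : List A) (x y : ℝ) :
    |psiA c b p w x - psiA c b p w y| = LamA c p w * |x - y| := by
  rw [psiA_sub, abs_mul]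
  congr 1
  induction w with
  | nil => simp [LamA]
  | cons a w ih => simp [LamA_cons, List.map_cons, List.prod_cons, abs_mul, ih]

lemma LamA_nonneg (c : ℝ → A → ℝ) (p : ℝ) (w : List A) : 0 ≤ LamA c p w := by
  induction w with
  | nil => simp [LamA_nil]
  | cons a w ih => rw [LamA_cons]; positivity

lemma LamA_pos (c : ℝ → A → ℝ) {γ' γ : ℝ} (hγ : GammaBoundsA c γ' γ)
    {p : ℝ} (hp : p ∈ Icc (-1:ℝ) 1) (w : List A) : 0 < LamA c p w := by
  induction w with
  | nil => simp [LamA_nil]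
  | cons a w ih =>
    rw [LamA_cons]
    exact mul_pos (lt_trans hγ.1 (hγ.2.2.2 p hp a).1) ih

lemma LamA_le (c : ℝ → A → ℝ) {γ' γ : ℝ} (hγ : GammaBoundsA c γ' γ)
    {p : ℝ} (hp : p ∈ Icc (-1:ℝ) 1) (w : List A) :
    LamA c p w ≤ γ ^ w.length := by
  induction w with
  | nil => simp [LamA_nil]
  | cons a w ih =>
    rw [LamA_cons, List.length_cons, pow_succ']
    exact mul_le_mul (le_of_lt (hγ.2.2.2 p hp a).2) ih (LamA_nonneg c p w)
      (le_of_lt (lt_trans hγ.1 hγ.2.1))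

lemma trunc_succ (α : ℕ → A) (n : ℕ) :
    Paper.trunc α (n+1) = Paper.trunc α n ++ [α n] := by
  unfold Paper.trunc
  rw [List.ofFn_succ']
  simp only [List.concat_eq_append, Fin.coe_castSucc, Fin.val_last]

lemma piA_tendsto (c b : ℝ → A → ℝ) (U : Set ℝ) (h : IFSHyp c b U)
    {γ' γ : ℝ} (hγ : GammaBoundsA c γ' γ)
    {p : ℝ} (hp : p ∈ Icc (-1:ℝ) 1) (α : ℕ → A) :
    Tendsto (fun n => psiA c b p (Paper.trunc α n) 0) atTop (𝓝 (piA c b p α)) := by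
  have hpU : p ∈ U := h.2.1 hp
  have hγ1 : γ < 1 := hγ.2.2.1
  have hcauchy : CauchySeq (fun n => psiA c b p (Paper.trunc α n) 0) := by
    apply cauchySeq_of_le_geometric γ 2 hγ1
    intro n
    rw [Real.dist_eq, trunc_succ, psiA_append, abs_psiA_sub]
    have hy : psiA c b p [α n] 0 ∈ Icc (-1:ℝ) 1 :=
      psiA_mem c b U h hpU _ (by norm_num)
    have h1 : |0 - psiA c b p [α n] 0| ≤ 2 := by
      rw [abs_sub_comm, sub_zero]
      rcases hy with ⟨h1, h2⟩
      rw [abs_le]; constructor <;> linarith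
    have h2 : LamA c p (Paper.trunc α n) ≤ γ ^ n := by
      have := LamA_le c hγ hp (Paper.trunc α n)
      simpa [Paper.trunc] using this
    calc LamA c p (Paper.trunc α n) * |0 - psiA c b p [α n] 0|
        ≤ γ ^ n * 2 := mul_le_mul h2 h1 (abs_nonneg _) (pow_nonneg (le_of_lt (lt_trans hγ.1 hγ.2.1)) n)
      _ = 2 * γ ^ n := mul_comm _ _
  obtain ⟨L, hL⟩ := cauchySeq_tendsto_of_complete hcauchy
  rw [piA, hL.limUnder_eq]
  exact hL

lemma psiA_continuous (c b : ℝ → A → ℝ) (p : ℝ) (w : List A) :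
    Continuous (psiA c b p w) := by
  induction w with
  | nil => exact continuous_id
  | cons a w ih =>
    have he : psiA c b p (a :: w) = fun x => c p a * psiA c b p w x + b p a :=
      funext fun x => rfl
    rw [he]
    exact (continuous_const.mul ih).add continuous_const

lemma trunc_prefix (α : ℕ → A) (w : List A)
    (hw : ∀ i : Fin w.length, α i = w.get i) (k : ℕ) :
    Paper.trunc α (w.length + k)
      = w ++ Paper.trunc (fun j => α (w.length + j)) k := by
  induction k with
  | zero =>
    simp only [Nat.add_zero, Paper.trunc, List.ofFn_zero, List.append_nil]
    apply List.ext_get (by simp)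
    intro i h1 h2
    simp only [List.get_ofFn]
    exact hw ⟨i, h2⟩
  | succ k ih =>
    rw [← Nat.add_assoc, trunc_succ, ih, trunc_succ, List.append_assoc]

lemma piA_shift (c b : ℝ → A → ℝ) (U : Set ℝ) (h : IFSHyp c b U)
    {γ' γ : ℝ} (hγ : GammaBoundsA c γ' γ)
    {p : ℝ} (hp : p ∈ Icc (-1:ℝ) 1) (α : ℕ → A) (w : List A)
    (hw : ∀ i : Fin w.length, α i = w.get i) :
    piA c b p α = psiA c b p w (piA c b p (fun j => α (w.length + j))) := by
  set α' : ℕ → A := fun j => α (w.length + j) with hα'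
  have h1 := piA_tendsto c b U h hγ hp α
  have h2 := piA_tendsto c b U h hγ hp α'
  have hmono : Tendsto (fun k : ℕ => w.length + k) atTop atTop :=
    tendsto_atTop_mono (fun k => Nat.le_add_left k w.length) tendsto_id
  have h3 : Tendsto (fun k => psiA c b p (Paper.trunc α (w.length + k)) 0) atTop
      (𝓝 (piA c b p α)) := h1.comp hmono
  have h4 : Tendsto (fun k => psiA c b p (Paper.trunc α (w.length + k)) 0) atTop
      (𝓝 (psiA c b p w (piA c b p α'))) := by
    have : (fun k => psiA c b p (Paper.trunc α (w.length + k)) 0)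
        = fun k => psiA c b p w (psiA c b p (Paper.trunc α' k) 0) := by
      funext k
      rw [trunc_prefix α w hw k, psiA_append]
    rw [this]
    exact ((psiA_continuous c b p w).tendsto _).comp h2
  exact tendsto_nhds_unique h3 h4

lemma LamA_rpow_le (c : ℝ → A → ℝ) (p₀ p : ℝ) (s : ℝ)
    (hd : ∀ a : A, |c p₀ a| ^ s ≤ |c p a|) (w : List A) :
    LamA c p₀ w ^ s ≤ LamA c p w := by
  induction w with
  | nil => simp [LamA_nil]
  | cons a w ih =>
    rw [LamA_cons, LamA_cons, Real.mul_rpow (abs_nonneg _) (LamA_nonneg c p₀ w)]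
    exact mul_le_mul (hd a) ih (Real.rpow_nonneg (LamA_nonneg c p₀ w) s) (abs_nonneg _)

end IFS

namespace IFS

/-- Lemma: localized transversality bound for pairs with common prefix ρ. -/
theorem lemma_borne {A : Type} [Fintype A] (hA : 2 ≤ Fintype.card A)
    (c b : ℝ → A → ℝ) (U : Set ℝ) (h : IFSHyp c b U)
    (γ' γ : ℝ) (hγ : GammaBoundsA c γ' γ)
    (hT : TransAff c b)
    (p₀ : ℝ) (hp₀ : p₀ ∈ Ioo (-1:ℝ) 1) (ε : ℝ) (hε : 0 < ε)
    (δ : ℝ) (hδ : 0 < δ)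
    (hB : Ioo (p₀ - δ) (p₀ + δ) ⊆ Ioo (-1:ℝ) 1)
    (hdistort : ∀ p₁ ∈ Ioo (p₀ - δ) (p₀ + δ), ∀ p₂ ∈ Ioo (p₀ - δ) (p₀ + δ), ∀ a : A,
      |c p₁ a| ^ (1 + ε / 2) ≤ |c p₂ a|) :
    ∃ C' > (0:ℝ), ∀ (w : List A) (α β : ℕ → A),
      (∀ i : Fin w.length, α i = w.get i) → (∀ i : Fin w.length, β i = w.get i) →
      α w.length ≠ β w.length → ∀ rr > (0:ℝ),
      volume {p ∈ Ioo (p₀ - δ) (p₀ + δ) | |piA c b p α - piA c b p β| < rr}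
        ≤ ENNReal.ofReal (C' * rr * LamA c p₀ w ^ (-(1:ℝ) - ε / 2)) := by
  obtain ⟨C, hC, hTC⟩ := hT
  refine ⟨C, hC, ?_⟩
  intro w α β hα hβ hne rr hrr
  have hp₀B : p₀ ∈ Ioo (p₀ - δ) (p₀ + δ) := by constructor <;> linarith
  have hp₀I : p₀ ∈ Icc (-1:ℝ) 1 := Ioo_subset_Icc_self hp₀
  have hLpos : 0 < LamA c p₀ w := LamA_pos c hγ hp₀I w
  have hLs : 0 < LamA c p₀ w ^ (1 + ε / 2) := Real.rpow_pos_of_pos hLpos _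
  set α' : ℕ → A := fun j => α (w.length + j) with hα'
  set β' : ℕ → A := fun j => β (w.length + j) with hβ'
  have hne' : α' 0 ≠ β' 0 := by
    simpa [hα', hβ'] using hne
  have hexp : (-(1:ℝ) - ε / 2) = -(1 + ε / 2) := by ring
  have hLinv : LamA c p₀ w ^ (-(1:ℝ) - ε / 2)
      = (LamA c p₀ w ^ (1 + ε / 2))⁻¹ := by
    rw [hexp, Real.rpow_neg hLpos.le]
  set rr' : ℝ := rr * LamA c p₀ w ^ (-(1:ℝ) - ε / 2) with hrrdef
  have hrr'pos : 0 < rr' := by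
    rw [hrrdef, hLinv]; positivity
  have hsub : {p ∈ Ioo (p₀ - δ) (p₀ + δ) | |piA c b p α - piA c b p β| < rr}
      ⊆ {p ∈ Ioo (-1:ℝ) 1 | |piA c b p α' - piA c b p β'| < rr'} := by
    rintro p ⟨hpB, hplt⟩
    have hpI : p ∈ Ioo (-1:ℝ) 1 := hB hpB
    have hpIcc : p ∈ Icc (-1:ℝ) 1 := Ioo_subset_Icc_self hpI
    have e1 : piA c b p α = psiA c b p w (piA c b p α') :=
      piA_shift c b U h hγ hpIcc α w hα
    have e2 : piA c b p β = psiA c b p w (piA c b p β') :=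
      piA_shift c b U h hγ hpIcc β w hβ
    rw [e1, e2, abs_psiA_sub] at hplt
    have hLam : LamA c p₀ w ^ (1 + ε / 2) ≤ LamA c p w :=
      LamA_rpow_le c p₀ p (1 + ε / 2) (fun a => hdistort p₀ hp₀B p hpB a) w
    refine ⟨hpI, ?_⟩
    rw [hrrdef, hLinv, ← div_eq_mul_inv, lt_div_iff₀ hLs]
    nlinarith [abs_nonneg (piA c b p α' - piA c b p β')]
  calc volume {p ∈ Ioo (p₀ - δ) (p₀ + δ) | |piA c b p α - piA c b p β| < rr}
      ≤ volume {p ∈ Ioo (-1:ℝ) 1 | |piA c b p α' - piA c b p β'| < rr'} :=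
        measure_mono hsub
    _ ≤ ENNReal.ofReal (C * rr') := hTC α' β' hne' rr' hrr'pos
    _ = ENNReal.ofReal (C * rr * LamA c p₀ w ^ (-(1:ℝ) - ε / 2)) := by
        rw [hrrdef, mul_assoc]


end IFS
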